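/- Let ψ(u) be the log-characteristic function of an infinitely divisible law with triplet (γ, σ, ν), ν(x) = k(x)/|x| self-decomposable, and let 0 < a < 1. Then ψ(u) - ψ(au) equals the log-characteristic function of the infinitely divisible law with triplet (γ_a, σ_a, ν_a) where γ_a = γ(1-a) - a ∫_ℝ sign(x)(1_{|x|≤1/a} - 1_{|x|≤1}) k(x) dx, σ_a = σ√(1-a²), and ν_a(x) = (k(x) - k(x/a))/|x|. -/

import Mathlib

open MeasureTheory Real Complex

/-- Log-characteristic function of an infinitely divisible law with triplet `(γ, σ, ν)`
in the Lévy–Khintchine representation. -/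
noncomputable def lkLogChf (γ σ : ℝ) (ν : ℝ → ℝ) (u : ℝ) : ℂ :=
  Complex.I * u * γ - σ ^ 2 * u ^ 2 / 2 +
    ∫ x : ℝ, (Complex.exp (Complex.I * u * x) - 1
        - Complex.I * u * x * (if |x| ≤ 1 then 1 else 0)) * (ν x)

/-- The centered exponential integrand of the Lévy–Khintchine formula. -/
noncomputable def lkF (u x : ℝ) : ℂ :=
  Complex.exp (Complex.I * u * x) - 1
    - Complex.I * u * x * (if |x| ≤ 1 then 1 else 0)

lemma lkLogChf_eq (γ σ : ℝ) (ν : ℝ → ℝ) (u : ℝ) :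
    lkLogChf γ σ ν u =
      Complex.I * u * γ - σ ^ 2 * u ^ 2 / 2 + ∫ x : ℝ, lkF u x * (ν x : ℂ) := rfl

lemma measurable_lkF (u : ℝ) : Measurable (lkF u) := by
  unfold lkF
  apply Measurable.sub
  · apply Measurable.sub
    · exact Complex.measurable_exp.comp (by fun_prop)
    · exact measurable_const
  · apply Measurable.mul (by fun_prop)
    exact Measurable.ite (measurableSet_le (by fun_prop) measurable_const)
      measurable_const measurable_const

lemma lkF_bound (u x : ℝ) : ‖lkF u x‖ ≤ (2 + 3 * u ^ 2) * min 1 (x ^ 2) := by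
  have hIux : Complex.I * u * x = ((u * x : ℝ) : ℂ) * Complex.I := by push_cast; ring
  by_cases hx : |x| ≤ 1
  · have hx2 : min 1 (x ^ 2) = x ^ 2 := by
      rw [min_eq_right]; nlinarith [abs_nonneg x, _root_.sq_abs x]
    have hform : lkF u x = Complex.exp (((u*x : ℝ):ℂ) * Complex.I) - 1 - ((u*x:ℝ):ℂ)*Complex.I := by
      simp [lkF, hx, hIux]
    by_cases hux : |u * x| ≤ 1
    · have h1 : ‖lkF u x‖ ≤ (u*x)^2 := by
        rw [hform]
        have habs : ‖(((u*x:ℝ):ℂ) * Complex.I)‖ = |u*x| := by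
          simp [map_mul, abs_mul]
        have := Complex.norm_exp_sub_one_sub_id_le (x := ((u*x:ℝ):ℂ) * Complex.I)
          (by rw [habs]; exact hux)
        rw [habs, _root_.sq_abs] at this
        simpa using this
      rw [hx2]
      calc ‖lkF u x‖ ≤ (u*x)^2 := h1
        _ = u^2 * x^2 := by ring
        _ ≤ (2 + 3*u^2) * x^2 := by nlinarith [sq_nonneg x, sq_nonneg u]
    · push_neg at hux
      have h1 : ‖lkF u x‖ ≤ 2 + |u*x| := by
        rw [hform]
        calc ‖Complex.exp (((u*x : ℝ):ℂ) * Complex.I) - 1 - ((u*x:ℝ):ℂ)*Complex.I‖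
            ≤ ‖Complex.exp (((u*x : ℝ):ℂ) * Complex.I) - 1‖ + ‖((u*x:ℝ):ℂ)*Complex.I‖ :=
              norm_sub_le _ _
          _ ≤ (‖Complex.exp (((u*x : ℝ):ℂ) * Complex.I)‖ + ‖(1:ℂ)‖) + |u*x| := by
              gcongr
              · exact norm_sub_le _ _
              · simp [map_mul, abs_mul]
          _ = 2 + |u*x| := by
              rw [Complex.norm_exp_ofReal_mul_I]; norm_num
      rw [hx2]
      have h2 : (1:ℝ) ≤ |u*x| := hux.le
      calc ‖lkF u x‖ ≤ 2 + |u*x| := h1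
        _ ≤ 3 * |u*x| := by nlinarith
        _ ≤ 3 * (u*x)^2 := by nlinarith [_root_.sq_abs (u*x)]
        _ = 3 * u^2 * x^2 := by ring
        _ ≤ (2 + 3*u^2) * x^2 := by nlinarith [sq_nonneg x]
  · have hx2 : min 1 (x ^ 2) = 1 := by
      rw [min_eq_left]; nlinarith [abs_nonneg x, _root_.sq_abs x, (not_le.mp hx)]
    have hform : lkF u x = Complex.exp (((u*x : ℝ):ℂ) * Complex.I) - 1 := by
      simp [lkF, hx, hIux]
    rw [hx2, hform, mul_one]
    calc ‖Complex.exp (((u*x : ℝ):ℂ) * Complex.I) - 1‖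
        ≤ ‖Complex.exp (((u*x : ℝ):ℂ) * Complex.I)‖ + ‖(1:ℂ)‖ := norm_sub_le _ _
      _ = 2 := by rw [Complex.norm_exp_ofReal_mul_I]; norm_num
      _ ≤ 2 + 3*u^2 := by nlinarith [sq_nonneg u]

lemma measurable_realSign : Measurable Real.sign := by
  unfold Real.sign
  exact Measurable.ite (measurableSet_lt measurable_id measurable_const) measurable_const
    (Measurable.ite (measurableSet_lt measurable_const measurable_id)
      measurable_const measurable_const)

lemma realSign_mul_abs (x : ℝ) : Real.sign x * |x| = x := by
  rcases lt_trichotomy x 0 with h | h | h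
  · rw [Real.sign_of_neg h, abs_of_neg h]; ring
  · simp [h]
  · rw [Real.sign_of_pos h, abs_of_pos h]; ring

lemma abs_realSign {x : ℝ} (hx : x ≠ 0) : |Real.sign x| = 1 := by
  rcases Real.sign_apply_eq_of_ne_zero x hx with h | h <;> simp [h]

lemma realSign_const_mul {a : ℝ} (ha : 0 < a) (x : ℝ) : Real.sign (a * x) = Real.sign x := by
  rcases lt_trichotomy x 0 with h | h | h
  · rw [Real.sign_of_neg h, Real.sign_of_neg (by nlinarith)]
  · simp [h]
  · rw [Real.sign_of_pos h, Real.sign_of_pos (by nlinarith)]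

lemma qmp_const_mul {c : ℝ} (hc : c ≠ 0) :
    Measure.QuasiMeasurePreserving (fun x : ℝ => c * x) volume volume := by
  refine ⟨measurable_const_mul c, ?_⟩
  rw [Real.map_volume_mul_left hc]
  exact Measure.smul_absolutelyContinuous
theorem stmt_12 (γ σ a : ℝ) (k ν : ℝ → ℝ) (ha0 : 0 < a) (ha1 : a < 1)
    (hk0 : ∀ x, 0 ≤ k x)
    (hmono : MonotoneOn k (Set.Iio (0:ℝ)))
    (hanti : AntitoneOn k (Set.Ioi (0:ℝ)))
    (hν : ∀ x : ℝ, x ≠ 0 → ν x = k x / |x|)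
    (hint : Integrable (fun x : ℝ => min 1 (x ^ 2) * ν x)) :
    ∀ u : ℝ,
      lkLogChf γ σ ν u - lkLogChf γ σ ν (a * u)
        = lkLogChf
            (γ * (1 - a) -
              a * ∫ x : ℝ, Real.sign x *
                ((if |x| ≤ 1 / a then (1:ℝ) else 0) - (if |x| ≤ 1 then (1:ℝ) else 0)) * k x)
            (σ * Real.sqrt (1 - a ^ 2))
            (fun x => (k x - k (x / a)) / |x|) u := by
  intro u
  classical
  have hane : a ≠ 0 := ha0.ne'
  have haine : a⁻¹ ≠ 0 := inv_ne_zero hane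
  set M : ℝ → ℝ := fun x => min 1 (x ^ 2) with hM
  have hMnn : ∀ x, 0 ≤ M x := fun x => le_min one_pos.le (sq_nonneg x)
  have hMmeas : Measurable M := measurable_const.min (measurable_id.pow_const 2)
  have hae0 : ∀ᵐ x : ℝ, x ≠ 0 := by
    have : volume ({0} : Set ℝ) = 0 := Real.volume_singleton
    rw [ae_iff]
    simpa [Set.setOf_eq_eq_singleton'] using this
  have hMpos : ∀ x : ℝ, x ≠ 0 → 0 < M x := fun x hx => lt_min one_pos (by positivity)
  -- integrability of the dominating function
  have hI1 : Integrable (fun x => M x * |ν x|) := by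
    have := hint.abs
    refine this.congr ?_
    filter_upwards with x
    rw [_root_.abs_mul, _root_.abs_of_nonneg (hMnn x)]
  -- a measurable a.e.-representative of ν
  have hνae : AEMeasurable ν (volume : Measure ℝ) := by
    have h1 : AEMeasurable (fun x => M x * ν x) := hint.aemeasurable
    have h2 : AEMeasurable (fun x => (M x)⁻¹ * (M x * ν x)) :=
      (hMmeas.inv.aemeasurable).mul h1
    refine h2.congr ?_
    filter_upwards [hae0] with x hx
    have hMx : M x ≠ 0 := (hMpos x hx).ne'
    field_simp
  obtain ⟨g, hgmeas, hgae⟩ := hνae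
  have hgae' : ν =ᵐ[volume] g := hgae
  have hkg : (fun x => k x) =ᵐ[volume] fun x => |x| * g x := by
    filter_upwards [hae0, hgae'] with x hx hgx
    have h1 : ν x = k x / |x| := hν x hx
    have h2 : |x| ≠ 0 := abs_ne_zero.mpr hx
    rw [← hgx, h1]
    field_simp
  have hka : (fun x => k (x / a)) =ᵐ[volume] fun x => |x / a| * g (x / a) := by
    have := (qmp_const_mul haine).ae_eq_comp hkg
    filter_upwards [this] with x hx
    simp only [Function.comp] at hx
    rw [div_eq_inv_mul]
    exact hx
  have hIcomp : Integrable (fun x => M (x / a) * |ν (x / a)|) := by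
    have := hI1.comp_mul_left' haine
    simpa only [div_eq_inv_mul] using this
  -- integrability of lkF v x * ν x
  have hT1 : ∀ v : ℝ, Integrable (fun x => lkF v x * ((ν x : ℝ) : ℂ)) := by
    intro v
    have hb : Integrable (fun x => (2 + 3 * v ^ 2) * (M x * |ν x|)) := hI1.const_mul _
    refine hb.mono' ?_ ?_
    · have h1 : AEStronglyMeasurable (fun x => lkF v x * ((g x : ℝ) : ℂ)) volume :=
        ((measurable_lkF v).mul (Complex.measurable_ofReal.comp hgmeas)).aestronglyMeasurable
      refine h1.congr ?_
      filter_upwards [hgae'] with x hx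
      rw [hx]
    · refine Filter.Eventually.of_forall fun x => ?_
      rw [norm_mul, Complex.norm_real, Real.norm_eq_abs, ← mul_assoc]
      exact mul_le_mul_of_nonneg_right (lkF_bound v x) (abs_nonneg _)
  -- integrability of lkF u x * (k (x/a) / |x|)
  have hT2 : Integrable (fun x => lkF u x * ((k (x / a) / |x| : ℝ) : ℂ)) := by
    have hb : Integrable (fun x => ((2 + 3 * u ^ 2) * a⁻¹) * (M (x / a) * |ν (x / a)|)) :=
      hIcomp.const_mul _
    refine hb.mono' ?_ ?_
    · have h1 : AEStronglyMeasurable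
          (fun x => lkF u x * ((|x / a| * g (x / a) / |x| : ℝ) : ℂ)) volume := by
        refine ((measurable_lkF u).mul ?_).aestronglyMeasurable
        refine Complex.measurable_ofReal.comp ?_
        exact ((measurable_id.div_const a).abs.mul
          (hgmeas.comp (measurable_id.div_const a))).div measurable_id.abs
      refine h1.congr ?_
      filter_upwards [hka] with x hx
      rw [hx]
    · filter_upwards [hae0] with x hx
      have hxa : x / a ≠ 0 := div_ne_zero hx hane
      have hνa0 : 0 ≤ ν (x / a) := by rw [hν _ hxa]; exact div_nonneg (hk0 _) (abs_nonneg _)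
      have habs : |x| ≠ 0 := abs_ne_zero.mpr hx
      have hk2 : k (x / a) / |x| = ν (x / a) * a⁻¹ := by
        rw [hν _ hxa, _root_.abs_div, _root_.abs_of_pos ha0]
        field_simp
      rw [norm_mul, Complex.norm_real, Real.norm_eq_abs, hk2,
        _root_.abs_of_nonneg (mul_nonneg hνa0 (by positivity : (0:ℝ) ≤ a⁻¹))]
      have hMle : M x ≤ M (x / a) := by
        refine min_le_min le_rfl ?_
        rw [div_pow]
        rw [le_div_iff₀ (by positivity : (0:ℝ) < a ^ 2)]
        have ha2 : a ^ 2 ≤ 1 := by nlinarith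
        nlinarith [mul_le_mul_of_nonneg_left ha2 (sq_nonneg x)]
      calc ‖lkF u x‖ * (ν (x / a) * a⁻¹)
          ≤ ((2 + 3 * u ^ 2) * M x) * (ν (x / a) * a⁻¹) :=
            mul_le_mul_of_nonneg_right (lkF_bound u x) (by positivity)
        _ ≤ ((2 + 3 * u ^ 2) * M (x / a)) * (ν (x / a) * a⁻¹) := by
            have h2 : (0:ℝ) ≤ 2 + 3 * u ^ 2 := by positivity
            have h3 : (0:ℝ) ≤ ν (x / a) * a⁻¹ := by positivity
            gcongr
        _ = ((2 + 3 * u ^ 2) * a⁻¹) * (M (x / a) * |ν (x / a)|) := by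
            rw [_root_.abs_of_nonneg hνa0]; ring
  -- integrability of the γ-correction integrand
  have hT3 : Integrable (fun x => Real.sign x *
      ((if |x| ≤ 1 / a then (1:ℝ) else 0) - (if |x| ≤ 1 then (1:ℝ) else 0)) * k x) := by
    have hb : Integrable (fun x => a⁻¹ * (M x * |ν x|)) := hI1.const_mul _
    refine hb.mono' ?_ ?_
    · have h1 : AEStronglyMeasurable (fun x => Real.sign x *
          ((if |x| ≤ 1 / a then (1:ℝ) else 0) - (if |x| ≤ 1 then (1:ℝ) else 0)) * (|x| * g x))
          volume := by
        refine Measurable.aestronglyMeasurable ?_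
        refine (Measurable.mul ?_ (measurable_id.abs.mul hgmeas))
        refine measurable_realSign.mul ?_
        refine Measurable.sub ?_ ?_ <;>
          exact Measurable.ite (measurableSet_le measurable_id.abs measurable_const)
            measurable_const measurable_const
      refine h1.congr ?_
      filter_upwards [hkg] with x hx
      rw [hx]
    · filter_upwards [hae0] with x hx
      have habs : |x| ≠ 0 := abs_ne_zero.mpr hx
      rw [Real.norm_eq_abs]
      by_cases h1 : |x| ≤ 1
      · have h2 : |x| ≤ 1 / a := h1.trans (by rw [le_div_iff₀ ha0]; nlinarith)
        simp only [h1, h2, if_true, sub_self, mul_zero, zero_mul, abs_zero]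
        positivity
      · by_cases h2 : |x| ≤ 1 / a
        · simp only [h1, h2, if_true, if_false, sub_zero, mul_one]
          have hν0 : ν x = k x / |x| := hν x hx
          have hkx : k x = |x| * ν x := by rw [hν0]; field_simp
          have hνnn : 0 ≤ ν x := by rw [hν0]; exact div_nonneg (hk0 x) (abs_nonneg x)
          rw [_root_.abs_mul, abs_realSign hx, one_mul, _root_.abs_of_nonneg (hk0 x)]
          have hMx : M x = 1 := by
            refine min_eq_left ?_
            nlinarith [abs_nonneg x, _root_.sq_abs x, not_le.mp h1]
          rw [hMx, one_mul, _root_.abs_of_nonneg hνnn, hkx]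
          have hxa : |x| ≤ a⁻¹ := by rwa [one_div] at h2
          exact mul_le_mul_of_nonneg_right hxa hνnn
        · simp only [h1, h2, if_false, sub_self, mul_zero, zero_mul, abs_zero]
          positivity
  -- identification of the two correction integrands via scaling
  have hGdef : ∀ x : ℝ, Real.sign x *
      ((if |x| ≤ 1 / a then (1:ℝ) else 0) - (if |x| ≤ 1 then (1:ℝ) else 0)) * k x
      = Real.sign (a * x) *
        ((if |a * x| ≤ 1 then (1:ℝ) else 0) - (if |a * x| ≤ a then (1:ℝ) else 0)) * k (a * x / a) := by
    intro x
    have hsign : Real.sign (a * x) = Real.sign x := realSign_const_mul ha0 x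
    have e1 : |a * x| ≤ 1 ↔ |x| ≤ 1 / a := by
      rw [_root_.abs_mul, _root_.abs_of_pos ha0, mul_comm, ← le_div_iff₀ ha0]
    have e2 : |a * x| ≤ a ↔ |x| ≤ 1 := by
      rw [_root_.abs_mul, _root_.abs_of_pos ha0]
      exact mul_le_iff_le_one_right ha0
    have e3 : a * x / a = x := by field_simp
    simp only [hsign, e1, e2, e3]
  have hT4 : Integrable (fun y => Real.sign y *
      ((if |y| ≤ 1 then (1:ℝ) else 0) - (if |y| ≤ a then (1:ℝ) else 0)) * k (y / a)) := by
    refine (integrable_comp_mul_left_iff _ hane).mp ?_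
    refine hT3.congr ?_
    refine Filter.Eventually.of_forall fun x => ?_
    exact hGdef x
  set D : ℝ := ∫ x, Real.sign x *
    ((if |x| ≤ 1 / a then (1:ℝ) else 0) - (if |x| ≤ 1 then (1:ℝ) else 0)) * k x with hD
  set B2 : ℝ := ∫ y, Real.sign y *
    ((if |y| ≤ 1 then (1:ℝ) else 0) - (if |y| ≤ a then (1:ℝ) else 0)) * k (y / a) with hB2
  have hDsub : B2 = a * D := by
    have hstep : D = a⁻¹ * B2 := by
      calc D = ∫ x, (fun y => Real.sign y *
            ((if |y| ≤ 1 then (1:ℝ) else 0) - (if |y| ≤ a then (1:ℝ) else 0)) * k (y / a))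
              (a * x) := by
            rw [hD]
            exact integral_congr_ae (Filter.Eventually.of_forall fun x => hGdef x)
        _ = |a⁻¹| • ∫ y, Real.sign y *
            ((if |y| ≤ 1 then (1:ℝ) else 0) - (if |y| ≤ a then (1:ℝ) else 0)) * k (y / a) :=
            Measure.integral_comp_mul_left (fun y => Real.sign y *
              ((if |y| ≤ 1 then (1:ℝ) else 0) - (if |y| ≤ a then (1:ℝ) else 0)) * k (y / a)) a
        _ = a⁻¹ * B2 := by
            rw [_root_.abs_inv, _root_.abs_of_pos ha0, smul_eq_mul, ← hB2]
    rw [hstep]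
    field_simp
  -- the left integrals
  set A : ℂ := ∫ x, lkF u x * ((ν x : ℝ) : ℂ) with hA
  set B1 : ℂ := ∫ x, lkF u x * ((k (x / a) / |x| : ℝ) : ℂ) with hB1
  -- the substitution for the second characteristic integral
  have hBsub : (∫ x, lkF (a * u) x * ((ν x : ℝ) : ℂ))
      = ((a⁻¹ : ℝ) : ℂ) * ∫ y, lkF (a * u) (a⁻¹ * y) * ((ν (a⁻¹ * y) : ℝ) : ℂ) := by
    calc (∫ x, lkF (a * u) x * ((ν x : ℝ) : ℂ))
        = ∫ x, (fun y => lkF (a * u) (a⁻¹ * y) * ((ν (a⁻¹ * y) : ℝ) : ℂ)) (a * x) := by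
          refine integral_congr_ae (Filter.Eventually.of_forall fun x => ?_)
          show lkF (a * u) x * ((ν x : ℝ) : ℂ)
            = lkF (a * u) (a⁻¹ * (a * x)) * ((ν (a⁻¹ * (a * x)) : ℝ) : ℂ)
          rw [inv_mul_cancel_left₀ hane]
      _ = |a⁻¹| • ∫ y, lkF (a * u) (a⁻¹ * y) * ((ν (a⁻¹ * y) : ℝ) : ℂ) :=
          Measure.integral_comp_mul_left
            (fun y => lkF (a * u) (a⁻¹ * y) * ((ν (a⁻¹ * y) : ℝ) : ℂ)) a
      _ = ((a⁻¹ : ℝ) : ℂ) * ∫ y, lkF (a * u) (a⁻¹ * y) * ((ν (a⁻¹ * y) : ℝ) : ℂ) := by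
          rw [_root_.abs_inv, _root_.abs_of_pos ha0, Complex.real_smul]
  -- pointwise identity after substitution
  have hphi2 : (fun y => lkF (a * u) (a⁻¹ * y) * ((ν (a⁻¹ * y) : ℝ) : ℂ))
      =ᵐ[volume] fun y => (a : ℂ) * (lkF u y * ((k (y / a) / |y| : ℝ) : ℂ))
        + (Complex.I * u * a) * ((Real.sign y *
          ((if |y| ≤ 1 then (1:ℝ) else 0) - (if |y| ≤ a then (1:ℝ) else 0)) * k (y / a) : ℝ) : ℂ) := by
    filter_upwards [hae0] with y hy
    have hinv : a⁻¹ * y = y / a := by rw [div_eq_inv_mul]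
    have hya : y / a ≠ 0 := div_ne_zero hy hane
    have habs : |y| ≠ 0 := abs_ne_zero.mpr hy
    have hν2 : ν (y / a) = a * (k (y / a) / |y|) := by
      rw [hν _ hya, abs_div, abs_of_pos ha0]
      rw [div_div_eq_mul_div]
      ring
    have h2 : |y / a| ≤ 1 ↔ |y| ≤ a := by
      rw [_root_.abs_div, _root_.abs_of_pos ha0, div_le_one ha0]
    have hlkF : lkF (a * u) (y / a) = lkF u y + Complex.I * u * y *
        ((if |y| ≤ 1 then (1:ℂ) else 0) - (if |y| ≤ a then (1:ℂ) else 0)) := by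
      unfold lkF
      have harg : Complex.I * ((a * u : ℝ) : ℂ) * ((y / a : ℝ) : ℂ) = Complex.I * u * y := by
        have : ((y / a : ℝ) : ℂ) = (y : ℂ) / (a : ℂ) := by push_cast; ring
        rw [this]
        have haC : (a : ℂ) ≠ 0 := Complex.ofReal_ne_zero.mpr hane
        field_simp
        push_cast
        ring
      rw [harg]
      simp only [h2]
      ring
    rw [hinv, hlkF, hν2]
    have hsgn : (y : ℂ) = ((Real.sign y : ℝ) : ℂ) * ((|y| : ℝ) : ℂ) := by
      rw [← Complex.ofReal_mul, realSign_mul_abs]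
    have hif1 : (if |y| ≤ 1 then (1:ℂ) else 0) = (((if |y| ≤ 1 then (1:ℝ) else 0) : ℝ) : ℂ) := by
      split_ifs <;> simp
    have hif2 : (if |y| ≤ a then (1:ℂ) else 0) = (((if |y| ≤ a then (1:ℝ) else 0) : ℝ) : ℂ) := by
      split_ifs <;> simp
    have habsC : ((|y| : ℝ) : ℂ) ≠ 0 := Complex.ofReal_ne_zero.mpr habs
    rw [hif1, hif2]
    push_cast
    rw [hsgn]
    field_simp
  -- split the substituted integral
  have hOfReal : (∫ y : ℝ, ((Real.sign y *
      ((if |y| ≤ 1 then (1:ℝ) else 0) - (if |y| ≤ a then (1:ℝ) else 0)) * k (y / a) : ℝ) : ℂ))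
      = ((B2 : ℝ) : ℂ) := by
    rw [hB2]
    exact integral_ofReal
  have hB : (∫ x, lkF (a * u) x * ((ν x : ℝ) : ℂ)) = B1 + Complex.I * u * a * (D : ℂ) := by
    have h1 : Integrable (fun y => ((a : ℝ) : ℂ) * (lkF u y * ((k (y / a) / |y| : ℝ) : ℂ))) :=
      hT2.const_mul _
    have h2 : Integrable (fun y => (Complex.I * u * a) * ((Real.sign y *
        ((if |y| ≤ 1 then (1:ℝ) else 0) - (if |y| ≤ a then (1:ℝ) else 0)) * k (y / a) : ℝ) : ℂ))
        volume := by
      exact (hT4.ofReal (𝕜 := ℂ)).const_mul _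
    have hadd := integral_add h1 h2
    rw [hBsub, integral_congr_ae hphi2, hadd]
    rw [integral_const_mul, integral_const_mul, hOfReal, ← hB1, hDsub]
    have haC : (a : ℂ) ≠ 0 := Complex.ofReal_ne_zero.mpr hane
    push_cast
    field_simp
  -- the right-hand integral
  have hC : (∫ x, lkF u x * (((k x - k (x / a)) / |x| : ℝ) : ℂ)) = A - B1 := by
    have he : (fun x => lkF u x * (((k x - k (x / a)) / |x| : ℝ) : ℂ))
        =ᵐ[volume] fun x => lkF u x * ((ν x : ℝ) : ℂ) - lkF u x * ((k (x / a) / |x| : ℝ) : ℂ) := by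
      filter_upwards [hae0] with x hx
      rw [hν x hx]
      rw [← mul_sub]
      congr 1
      push_cast
      ring
    rw [integral_congr_ae he, integral_sub (hT1 u) hT2, ← hA, ← hB1]
  -- assemble
  rw [lkLogChf_eq, lkLogChf_eq, lkLogChf_eq, hB, hC]
  have hsq : ((σ * Real.sqrt (1 - a ^ 2) : ℝ) : ℂ) ^ 2 = (σ : ℂ) ^ 2 * (1 - (a : ℂ) ^ 2) := by
    rw [← Complex.ofReal_pow, mul_pow, Real.sq_sqrt (by nlinarith : (0:ℝ) ≤ 1 - a ^ 2)]
    push_cast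
    ring
  rw [hsq]
  push_cast
  ring
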